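/- With the above definitions, b²·(1 + α' − 2α/a) ≤ (α²/α'²)·(1 − α'). -/

import Mathlib

theorem pty_inner_main (α γ a α' b : ℝ)
    (hα0 : 0 < α) (hα : α ≤ 1/2) (hγ : 0 ≤ γ)
    (ha : a = Real.exp γ)
    (hα' : α' = 1 / (1/α + 2*γ))
    (hb : b = 1 + (α - α')/2) :
    b^2 * (1 + α' - 2*α/a) ≤ (α^2/α'^2) * (1 - α') := by
  have hu : (0:ℝ) < 1 + 2*α*γ := by nlinarith
  have hα'eq : α' * (1 + 2*α*γ) = α := by
    rw [hα']; field_simp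
  have hα'pos : 0 < α' := by
    rw [hα']; positivity
  have hexp : 1 - γ ≤ Real.exp (-γ) := by
    have := Real.add_one_le_exp (-γ); linarith
  have hinv : 2*α/a = 2*α*Real.exp (-γ) := by
    rw [ha, Real.exp_neg]; ring
  have hstep : 2*α*(1-γ) ≤ 2*α/a := by
    rw [hinv]; nlinarith
  have h1 : b^2 * (1 + α' - 2*α/a) ≤ b^2 * (1 + α' - 2*α*(1-γ)) := by
    apply mul_le_mul_of_nonneg_left _ (sq_nonneg b)
    linarith
  apply h1.trans
  have hratio : α/α' = 1 + 2*α*γ := by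
    field_simp [ne_of_gt hα'pos]
    linarith [hα'eq]
  have hrhs : α^2/α'^2 = (1 + 2*α*γ)^2 := by
    rw [← hratio, div_pow]
  rw [hrhs, hb]
  set t := 2*α*γ with ht
  have htn : 0 ≤ t := by positivity
  have hαs : α = α' + α'*t := by linarith [hα'eq]; 
  have hγt : 2*α*(1-γ) = 2*α - t := by rw [ht]; ring
  rw [hγt, hαs]
  have hhalf : α' + α'*t ≤ 1/2 := by linarith [hαs ▸ hα]
  have h2 : (0:ℝ) ≤ 1/2 - α' - α'*t := by linarith
  have hA : 0 ≤ α'*t^2*(1/2 - α' - α'*t) := by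
    apply mul_nonneg _ h2; positivity
  have hB : 0 ≤ t*(α'-1/2)^2 := mul_nonneg htn (sq_nonneg _)
  have hC : 0 ≤ t^2*(32*α'-17)^2 := mul_nonneg (sq_nonneg t) (sq_nonneg _)
  have hD : 0 ≤ α'^3*t^2 := by positivity
  have hE : 0 ≤ α'^3*t^3 := by positivity
  nlinarith [hA, hB, hC, hD, hE, htn, hα'pos]
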